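/- Every word over {a,b,c} (with moves a=(1,0), b=(0,1), c=(1,1)) from (p,q) to (r,s) has length at least max(r-p, s-q), and the unique word avoiding the factors ab, ba, ac, bc achieves this minimum length. -/

import Mathlib

/-- The 4-letter alphabet {a, b, c, x}. -/
inductive Ltr | a | b | c | x
deriving DecidableEq

/-- The forbidden two-letter factors: ab, ba, ac, bc. -/
def forb : List (List Ltr) := [[.a, .b], [.b, .a], [.a, .c], [.b, .c]]

/-- `w` avoids all of ab, ba, ac, bc as factors. -/
def Avoids (w : List Ltr) : Prop := ∀ f ∈ forb, ¬ f <:+: w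

/-- Moves on the 2-dimensional grid: a = (1,0), b = (0,1), c = (1,1), x = (1,1). -/
def mv : Ltr → ℕ × ℕ
  | .a => (1, 0)
  | .b => (0, 1)
  | .c => (1, 1)
  | .x => (1, 1)

/-- Total displacement of a word. -/
def disp (w : List Ltr) : ℕ × ℕ := (w.map mv).sum

/-- `w` is a word over {a,b,c} whose moves go from `(p,q)` to `(r,s)`. -/
def Connects (p q r s : ℕ) (w : List Ltr) : Prop :=
  Ltr.x ∉ w ∧ p + (disp w).1 = r ∧ q + (disp w).2 = s

lemma disp_cons (ℓ : Ltr) (t : List Ltr) : disp (ℓ :: t) = mv ℓ + disp t := by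
  simp [disp]

lemma disp_le_length (w : List Ltr) :
    (disp w).1 ≤ w.length ∧ (disp w).2 ≤ w.length := by
  induction w with
  | nil => simp [disp]
  | cons ℓ t ih =>
    obtain ⟨h1, h2⟩ := ih
    rw [disp_cons]
    cases ℓ <;> simp [mv, Prod.fst_add, Prod.snd_add] <;> omega

lemma avoids_infix {u w : List Ltr} (h : u <:+: w) (hw : Avoids w) : Avoids u :=
  fun f hf hfu => hw f hf (hfu.trans h)

lemma all_a : ∀ t : List Ltr, Avoids (Ltr.a :: t) → Ltr.x ∉ t → ∀ l ∈ t, l = Ltr.a := by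
  intro t
  induction t with
  | nil => simp
  | cons h t' ih =>
    intro hav hx l hl
    have hha : h = Ltr.a := by
      cases h with
      | a => rfl
      | b => exact absurd ⟨[], t', rfl⟩ (hav [.a, .b] (by simp [forb]))
      | c => exact absurd ⟨[], t', rfl⟩ (hav [.a, .c] (by simp [forb]))
      | x => exact absurd (by simp) hx
    subst hha
    rcases List.mem_cons.mp hl with h1 | h1
    · exact h1
    · exact ih (avoids_infix ⟨[Ltr.a], [], by simp⟩ hav)
        (fun hm => hx (List.mem_cons_of_mem _ hm)) l h1

lemma all_b : ∀ t : List Ltr, Avoids (Ltr.b :: t) → Ltr.x ∉ t → ∀ l ∈ t, l = Ltr.b := by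
  intro t
  induction t with
  | nil => simp
  | cons h t' ih =>
    intro hav hx l hl
    have hha : h = Ltr.b := by
      cases h with
      | b => rfl
      | a => exact absurd ⟨[], t', rfl⟩ (hav [.b, .a] (by simp [forb]))
      | c => exact absurd ⟨[], t', rfl⟩ (hav [.b, .c] (by simp [forb]))
      | x => exact absurd (by simp) hx
    subst hha
    rcases List.mem_cons.mp hl with h1 | h1
    · exact h1
    · exact ih (avoids_infix ⟨[Ltr.b], [], by simp⟩ hav)
        (fun hm => hx (List.mem_cons_of_mem _ hm)) l h1

lemma disp_const (ℓ : Ltr) : ∀ t : List Ltr, (∀ l ∈ t, l = ℓ) →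
    disp t = ((mv ℓ).1 * t.length, (mv ℓ).2 * t.length) := by
  intro t
  induction t with
  | nil => simp [disp]; rfl
  | cons h t' ih =>
    intro hall
    have hh := hall h (by simp)
    subst hh
    rw [disp_cons, ih (fun l hl => hall l (by simp [hl]))]
    simp [Prod.ext_iff, Prod.fst_add, Prod.snd_add]
    constructor <;> ring

lemma len_eq (w : List Ltr) (hav : Avoids w) (hx : Ltr.x ∉ w) :
    w.length = max (disp w).1 (disp w).2 := by
  induction w with
  | nil => simp [disp]
  | cons ℓ t ih =>
    have hxt : Ltr.x ∉ t := fun h => hx (List.mem_cons_of_mem _ h)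
    cases ℓ with
    | x => exact absurd (by simp) hx
    | c =>
      have h1 := ih (avoids_infix ⟨[Ltr.c], [], by simp⟩ hav) hxt
      rw [disp_cons]
      simp only [mv, Prod.fst_add, Prod.snd_add, List.length_cons]
      omega
    | a =>
      have hall := all_a t hav hxt
      have hd := disp_const Ltr.a t hall
      rw [disp_cons, hd]
      simp [mv, Prod.fst_add, Prod.snd_add]; omega
    | b =>
      have hall := all_b t hav hxt
      have hd := disp_const Ltr.b t hall
      rw [disp_cons, hd]
      simp [mv, Prod.fst_add, Prod.snd_add]; omega

/-- Every word over {a,b,c} from `(p,q)` to `(r,s)` has length at least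
`max (r-p) (s-q)`, and any word avoiding the factors ab, ba, ac, bc achieves
this minimum length. -/
theorem shortest_avoiding_path (p q r s : ℕ) (hp : p ≤ r) (hq : q ≤ s) :
    (∀ w : List Ltr, Connects p q r s w → max (r - p) (s - q) ≤ w.length) ∧
    (∀ w : List Ltr, Connects p q r s w → Avoids w →
      w.length = max (r - p) (s - q)) := by
  constructor
  · rintro w ⟨hxw, h1, h2⟩
    obtain ⟨l1, l2⟩ := disp_le_length w
    omega
  · rintro w ⟨hxw, h1, h2⟩ hav
    have := len_eq w hav hxw
    omega
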